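/- Let C : [0,∞) → 𝒫(ℝ) be admissible with {(x,h) : x ∈ C(h)} Lebesgue-measurable, each C(h) of finite measure, and ρ[C] finite almost everywhere. Let C̃ : [0,∞) → 𝒫(ℝ) be another family with {(x,h) : x ∈ C̃(h)} Lebesgue-measurable, ρ[C̃] finite almost everywhere, and |C̃(h)| = |C(h)| for every h ≥ 0. Let Φ : [0,∞) → ℝ be differentiable and convex with Φ(0) = 0 and Φ' ≥ 0, and assume h ↦ Φ'(h)·|C(h)| is integrable on (0,∞). Then ∫_ℝ Φ(ρ[C̃](x)) dx ≤ ∫_ℝ Φ(ρ[C](x)) dx. In particular, any rearrangement of the level sets of a density that preserves the measure of each level set does not increase the internal energy. -/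

import Mathlib

open MeasureTheory Set

open scoped ENNReal

/-- "Bathtub" lemma: for a monotone nonnegative weight, the integral over `[0, |S|]`
is at most the integral over `S`, for any `S ⊆ [0, ∞)` of finite measure. -/
lemma bathtub_aux {F : ℝ → ℝ≥0∞} (hFm : Measurable F) (hF : Monotone F)
    {S : Set ℝ} (hS : MeasurableSet S) (hS0 : S ⊆ Ici 0) (hfin : volume S ≠ ⊤) :
    ∫⁻ h in Icc 0 (volume S).toReal, F h ≤ ∫⁻ h in S, F h := by
  set t := (volume S).toReal with ht_def
  have hT : MeasurableSet (Icc (0:ℝ) t) := measurableSet_Icc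
  have hvolT : volume (Icc (0:ℝ) t) = volume S := by
    rw [Real.volume_Icc, sub_zero, ENNReal.ofReal_toReal hfin]
  have hfinIS : volume (S ∩ Icc 0 t) ≠ ⊤ :=
    ((measure_mono inter_subset_left).trans_lt hfin.lt_top).ne
  have hveq : volume (Icc 0 t \ S) = volume (S \ Icc 0 t) := by
    have h1 : Icc 0 t \ S = Icc 0 t \ (S ∩ Icc 0 t) := by
      ext x; simp only [mem_diff, mem_inter_iff]; tauto
    have h2 : S \ Icc 0 t = S \ (S ∩ Icc 0 t) := by
      ext x; simp only [mem_diff, mem_inter_iff]; tauto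
    rw [h1, h2, measure_diff inter_subset_right (hS.inter hT).nullMeasurableSet hfinIS,
      measure_diff inter_subset_left (hS.inter hT).nullMeasurableSet hfinIS, hvolT]
  have hdT : (∫⁻ h in Icc 0 t ∩ S, F h) + ∫⁻ h in Icc 0 t \ S, F h = ∫⁻ h in Icc 0 t, F h :=
    lintegral_inter_add_diff F _ hS
  have hdS : (∫⁻ h in S ∩ Icc 0 t, F h) + ∫⁻ h in S \ Icc 0 t, F h = ∫⁻ h in S, F h :=
    lintegral_inter_add_diff F _ hT
  have hb1 : ∫⁻ h in Icc 0 t \ S, F h ≤ F t * volume (Icc 0 t \ S) := by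
    calc ∫⁻ h in Icc 0 t \ S, F h ≤ ∫⁻ _ in Icc 0 t \ S, F t :=
          setLIntegral_mono measurable_const fun h hh => hF hh.1.2
      _ = F t * volume (Icc 0 t \ S) := setLIntegral_const _ _
  have hb2 : F t * volume (S \ Icc 0 t) ≤ ∫⁻ h in S \ Icc 0 t, F h := by
    calc F t * volume (S \ Icc 0 t) = ∫⁻ _ in S \ Icc 0 t, F t := (setLIntegral_const _ _).symm
      _ ≤ ∫⁻ h in S \ Icc 0 t, F h := by
          refine setLIntegral_mono hFm fun h hh => hF ?_
          by_contra hle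
          exact hh.2 ⟨hS0 hh.1, (not_le.mp hle).le⟩
  calc ∫⁻ h in Icc 0 t, F h
      = (∫⁻ h in Icc 0 t ∩ S, F h) + ∫⁻ h in Icc 0 t \ S, F h := hdT.symm
    _ ≤ (∫⁻ h in Icc 0 t ∩ S, F h) + F t * volume (Icc 0 t \ S) := add_le_add_right hb1 _
    _ = (∫⁻ h in S ∩ Icc 0 t, F h) + F t * volume (S \ Icc 0 t) := by rw [inter_comm, hveq]
    _ ≤ (∫⁻ h in S ∩ Icc 0 t, F h) + ∫⁻ h in S \ Icc 0 t, F h := add_le_add_right hb2 _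
    _ = ∫⁻ h in S, F h := hdS

/-- Tonelli computation: integrating the section integrals gives the weighted level-set
measures. -/
lemma tonelli_aux (D : ℝ → Set ℝ)
    (hD : MeasurableSet {p : ℝ × ℝ | 0 ≤ p.2 ∧ p.1 ∈ D p.2})
    (F : ℝ → ℝ≥0∞) (hF : Measurable F) :
    ∫⁻ x : ℝ, ∫⁻ h in {h : ℝ | 0 ≤ h ∧ x ∈ D h}, F h =
      ∫⁻ h in Ici (0:ℝ), F h * volume (D h) := by
  set A := {p : ℝ × ℝ | 0 ≤ p.2 ∧ p.1 ∈ D p.2} with hA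
  have hsec : ∀ x : ℝ, MeasurableSet {h : ℝ | 0 ≤ h ∧ x ∈ D h} := fun x =>
    hD.preimage (measurable_prodMk_left (x := x))
  have h1 : ∀ x : ℝ, ∫⁻ h in {h : ℝ | 0 ≤ h ∧ x ∈ D h}, F h
      = ∫⁻ h, A.indicator (fun p : ℝ × ℝ => F p.2) (x, h) := by
    intro x
    rw [← lintegral_indicator (hsec x)]
    refine lintegral_congr fun h => ?_
    by_cases hx : (0 ≤ h ∧ x ∈ D h)
    · rw [indicator_of_mem (a := h) (s := {h : ℝ | 0 ≤ h ∧ x ∈ D h}) hx,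
        indicator_of_mem (show (x, h) ∈ A from hx)]
    · rw [indicator_of_notMem (a := h) (s := {h : ℝ | 0 ≤ h ∧ x ∈ D h}) hx,
        indicator_of_notMem (show (x, h) ∉ A from hx)]
  have hGm : Measurable (A.indicator (fun q : ℝ × ℝ => F q.2)) :=
    (hF.comp measurable_snd).indicator hD
  have h2 : ∫⁻ x : ℝ, ∫⁻ h : ℝ, A.indicator (fun p : ℝ × ℝ => F p.2) (x, h)
      = ∫⁻ h : ℝ, ∫⁻ x : ℝ, A.indicator (fun p : ℝ × ℝ => F p.2) (x, h) :=
    lintegral_lintegral_swap hGm.aemeasurable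
  have h3 : ∀ h : ℝ, ∫⁻ x, A.indicator (fun p : ℝ × ℝ => F p.2) (x, h)
      = F h * volume {x : ℝ | (x, h) ∈ A} := by
    intro h
    have hsec' : MeasurableSet {x : ℝ | (x, h) ∈ A} :=
      hD.preimage (measurable_prodMk_right (y := h))
    have : (fun x : ℝ => A.indicator (fun p : ℝ × ℝ => F p.2) (x, h))
        = {x : ℝ | (x, h) ∈ A}.indicator (fun _ => F h) := by
      funext x
      by_cases hx : (x, h) ∈ A
      · rw [indicator_of_mem hx, indicator_of_mem (by exact hx)]
      · rw [indicator_of_notMem hx, indicator_of_notMem (by exact hx)]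
    rw [this, lintegral_indicator_const hsec']
  have h4 : (fun h : ℝ => F h * volume {x : ℝ | (x, h) ∈ A}) =
      (Ici (0:ℝ)).indicator (fun h => F h * volume (D h)) := by
    funext h
    by_cases hh : (0:ℝ) ≤ h
    · have hs : {x : ℝ | (x, h) ∈ A} = D h := by ext x; simp [hA, hh]
      rw [hs, indicator_of_mem (mem_Ici.2 hh)]
    · have hs : {x : ℝ | (x, h) ∈ A} = ∅ := by ext x; simp [hA, hh]
      rw [hs, indicator_of_notMem (by simpa using hh)]
      simp
  calc ∫⁻ x : ℝ, ∫⁻ h in {h : ℝ | 0 ≤ h ∧ x ∈ D h}, F h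
      = ∫⁻ x : ℝ, ∫⁻ h : ℝ, A.indicator (fun p : ℝ × ℝ => F p.2) (x, h) := by
        exact lintegral_congr h1
    _ = ∫⁻ h : ℝ, ∫⁻ x : ℝ, A.indicator (fun p : ℝ × ℝ => F p.2) (x, h) := h2
    _ = ∫⁻ h : ℝ, (Ici (0:ℝ)).indicator (fun h => F h * volume (D h)) h := by
        rw [← h4]; exact lintegral_congr h3
    _ = ∫⁻ h in Ici (0:ℝ), F h * volume (D h) := lintegral_indicator measurableSet_Ici _

/-- Corollary 4.3: a level-set rearrangement preserving the measure of every level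
set does not increase the internal energy. -/
theorem stmt_7 (C Ct : ℝ → Set ℝ)
    (hadm : ∀ h₁ h₂ : ℝ, 0 ≤ h₁ → h₁ ≤ h₂ → C h₂ ⊆ C h₁)
    (hmeas : MeasurableSet {p : ℝ × ℝ | 0 ≤ p.2 ∧ p.1 ∈ C p.2})
    (hfin : ∀ h : ℝ, volume (C h) < ⊤)
    (hρfin : ∀ᵐ x : ℝ, volume {h : ℝ | 0 ≤ h ∧ x ∈ C h} ≠ ⊤)
    (hmeas' : MeasurableSet {p : ℝ × ℝ | 0 ≤ p.2 ∧ p.1 ∈ Ct p.2})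
    (hρfin' : ∀ᵐ x : ℝ, volume {h : ℝ | 0 ≤ h ∧ x ∈ Ct h} ≠ ⊤)
    (hsame : ∀ h : ℝ, 0 ≤ h → volume (Ct h) = volume (C h))
    (Φ Φ' : ℝ → ℝ)
    (hΦdiff : ∀ x ∈ Ici (0:ℝ), HasDerivWithinAt Φ (Φ' x) (Ici 0) x)
    (hΦconv : ConvexOn ℝ (Ici 0) Φ)
    (hΦ0 : Φ 0 = 0)
    (hΦ'nn : ∀ x ∈ Ici (0:ℝ), 0 ≤ Φ' x)
    (hint : IntegrableOn (fun h => Φ' h * (volume (C h)).toReal) (Ioi 0)) :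
    (∫ x : ℝ, Φ ((volume {h : ℝ | 0 ≤ h ∧ x ∈ Ct h}).toReal)) ≤
      ∫ x : ℝ, Φ ((volume {h : ℝ | 0 ≤ h ∧ x ∈ C h}).toReal) := by
  -- Monotonicity of Φ' on [0, ∞)
  have hmono : MonotoneOn Φ' (Ici 0) := by
    intro a ha b hb hab
    rcases eq_or_lt_of_le hab with rfl | hlt
    · exact le_rfl
    · exact (hΦconv.le_slope_of_hasDerivWithinAt ha hb hlt (hΦdiff a ha)).trans
        (hΦconv.slope_le_of_hasDerivWithinAt ha hb hlt (hΦdiff b hb))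
  -- FTC representation of Φ
  have hΦrep : ∀ t : ℝ, 0 ≤ t → Φ t = ∫ s in (0:ℝ)..t, Φ' s := by
    intro t ht
    have hii : IntervalIntegrable Φ' volume 0 t := by
      apply MonotoneOn.intervalIntegrable
      rw [uIcc_of_le ht]
      exact hmono.mono (Icc_subset_Ici_self)
    have hcont0 : ContinuousOn Φ (Ici 0) := fun x hx => (hΦdiff x hx).continuousWithinAt
    have hcont : ContinuousOn Φ (Icc 0 t) := hcont0.mono Icc_subset_Ici_self
    have hderiv : ∀ x ∈ Ioo (0:ℝ) t, HasDerivWithinAt Φ (Φ' x) (Ioi x) x :=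
      fun x hx => (hΦdiff x hx.1.le).mono fun y hy => (hx.1.trans hy).le
    have := intervalIntegral.integral_eq_sub_of_hasDeriv_right_of_le ht hcont hderiv hii
    rw [this, hΦ0, sub_zero]
  have hΦnn : ∀ t : ℝ, 0 ≤ t → 0 ≤ Φ t := by
    intro t ht
    rw [hΦrep t ht]
    exact intervalIntegral.integral_nonneg ht fun u hu => hΦ'nn u hu.1
  -- The monotone ENNReal-valued weight
  set F : ℝ → ℝ≥0∞ := fun h => ENNReal.ofReal (Φ' (max h 0)) with hF_def
  have hFmono : Monotone F := fun a b hab =>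
    ENNReal.ofReal_le_ofReal
      (hmono (le_max_right a 0) (le_max_right b 0) (max_le_max hab le_rfl))
  have hFmeas : Measurable F := hFmono.measurable
  -- FTC in lintegral form
  have hFTC : ∀ t : ℝ, 0 ≤ t → ENNReal.ofReal (Φ t) = ∫⁻ h in Icc 0 t, F h := by
    intro t ht
    have hii : IntervalIntegrable Φ' volume 0 t := by
      apply MonotoneOn.intervalIntegrable
      rw [uIcc_of_le ht]
      exact hmono.mono (Icc_subset_Ici_self)
    have hnn : 0 ≤ᵐ[volume.restrict (Ioc 0 t)] Φ' :=
      (ae_restrict_iff' measurableSet_Ioc).2 (ae_of_all _ fun h hh => hΦ'nn h hh.1.le)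
    rw [hΦrep t ht, intervalIntegral.integral_of_le ht,
      ofReal_integral_eq_lintegral_ofReal hii.1 hnn]
    calc ∫⁻ h in Ioc 0 t, ENNReal.ofReal (Φ' h)
        = ∫⁻ h in Ioc 0 t, F h := by
          refine setLIntegral_congr_fun measurableSet_Ioc (fun h hh => ?_)
          rw [hF_def]; simp only [max_eq_left hh.1.le]
      _ = ∫⁻ h in Icc 0 t, F h := setLIntegral_congr Ioc_ae_eq_Icc
  -- sections
  set SC : ℝ → Set ℝ := fun x => {h : ℝ | 0 ≤ h ∧ x ∈ C h} with hSC_def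
  set St : ℝ → Set ℝ := fun x => {h : ℝ | 0 ≤ h ∧ x ∈ Ct h} with hSt_def
  have hsecC : ∀ x : ℝ, MeasurableSet (SC x) := fun x =>
    hmeas.preimage (measurable_prodMk_left (x := x))
  have hsecT : ∀ x : ℝ, MeasurableSet (St x) := fun x =>
    hmeas'.preimage (measurable_prodMk_left (x := x))
  have hsubC : ∀ x : ℝ, SC x ⊆ Ici 0 := fun x h hh => hh.1
  have hsubT : ∀ x : ℝ, St x ⊆ Ici 0 := fun x h hh => hh.1
  -- pointwise identity for the admissible family
  have hptC : ∀ᵐ x : ℝ, ENNReal.ofReal (Φ ((volume (SC x)).toReal)) = ∫⁻ h in SC x, F h := by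
    filter_upwards [hρfin] with x hx
    set t := (volume (SC x)).toReal with htdef
    have ht : 0 ≤ t := ENNReal.toReal_nonneg
    have hico : Ico 0 t ⊆ SC x := by
      intro h hh
      by_contra hns
      have hsub : SC x ⊆ Ico 0 h := by
        intro h' hh'
        refine ⟨hh'.1, ?_⟩
        by_contra hge
        exact hns ⟨hh.1, hadm h h' hh.1 (not_lt.mp hge) hh'.2⟩
      have hle : volume (SC x) ≤ ENNReal.ofReal h := by
        simpa [Real.volume_Ico, sub_zero] using measure_mono (μ := volume) hsub
      have : t ≤ h := by
        have := ENNReal.toReal_mono ENNReal.ofReal_ne_top hle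
        simpa [ENNReal.toReal_ofReal hh.1] using this
      exact absurd hh.2 (not_lt.mpr this)
    have hicc : SC x ⊆ Icc 0 t := by
      intro h hh
      refine ⟨hh.1, ?_⟩
      have hsub : Icc 0 h ⊆ SC x := fun h' hh' => ⟨hh'.1, hadm h' h hh'.1 hh'.2 hh.2⟩
      have hle : ENNReal.ofReal h ≤ volume (SC x) := by
        simpa [Real.volume_Icc, sub_zero] using measure_mono (μ := volume) hsub
      calc h = (ENNReal.ofReal h).toReal := (ENNReal.toReal_ofReal hh.1).symm
        _ ≤ t := ENNReal.toReal_mono hx hle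
    have haeeq : SC x =ᵐ[volume] Icc 0 t := by
      rw [MeasureTheory.ae_eq_set]
      constructor
      · rw [diff_eq_empty.2 hicc]; simp
      · refine measure_mono_null ?_ (measure_singleton t)
        intro h hh
        have : h ∉ Ico 0 t := fun hmem => hh.2 (hico hmem)
        have h1 : h ≤ t := hh.1.2
        have h0 : 0 ≤ h := hh.1.1
        rcases lt_or_eq_of_le h1 with hlt | heq
        · exact absurd ⟨h0, hlt⟩ this
        · exact heq
    rw [hFTC t ht, setLIntegral_congr haeeq]
  -- pointwise inequality for the rearranged family
  have hptT : ∀ᵐ x : ℝ,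
      ENNReal.ofReal (Φ ((volume (St x)).toReal)) ≤ ∫⁻ h in St x, F h := by
    filter_upwards [hρfin'] with x hx
    rw [hFTC _ ENNReal.toReal_nonneg]
    exact bathtub_aux hFmeas hFmono (hsecT x) (hsubT x) hx
  -- Tonelli
  have hTonC : ∫⁻ x : ℝ, ∫⁻ h in SC x, F h = ∫⁻ h in Ici (0:ℝ), F h * volume (C h) :=
    tonelli_aux C hmeas F hFmeas
  have hTonT : ∫⁻ x : ℝ, ∫⁻ h in St x, F h = ∫⁻ h in Ici (0:ℝ), F h * volume (Ct h) :=
    tonelli_aux Ct hmeas' F hFmeas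
  have hsame' : ∫⁻ h in Ici (0:ℝ), F h * volume (Ct h) = ∫⁻ h in Ici (0:ℝ), F h * volume (C h) :=
    setLIntegral_congr_fun measurableSet_Ici (fun h hh => by rw [hsame h hh])
  -- finiteness from the integrability hypothesis
  have hfinA : ∫⁻ h in Ici (0:ℝ), F h * volume (C h) ≠ ⊤ := by
    have he : ∫⁻ h in Ici (0:ℝ), F h * volume (C h) = ∫⁻ h in Ioi (0:ℝ), F h * volume (C h) :=
      (setLIntegral_congr (Ioi_ae_eq_Ici (a := (0:ℝ)))).symm
    rw [he]
    have hcongr : ∫⁻ h in Ioi (0:ℝ), F h * volume (C h)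
        = ∫⁻ h in Ioi (0:ℝ), ENNReal.ofReal (Φ' h * (volume (C h)).toReal) := by
      refine setLIntegral_congr_fun measurableSet_Ioi (fun h hh => ?_)
      rw [ENNReal.ofReal_mul (hΦ'nn h (le_of_lt (show (0:ℝ) < h from hh))), ENNReal.ofReal_toReal (hfin h).ne,
        hF_def]
      simp only [max_eq_left (le_of_lt (show (0:ℝ) < h from hh))]
    rw [hcongr]
    exact hint.lintegral_lt_top.ne
  -- measurability and nonnegativity of the integrands
  have hρCmeas : Measurable fun x => (volume (SC x)).toReal :=
    (measurable_measure_prodMk_left hmeas).ennreal_toReal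
  have hρTmeas : Measurable fun x => (volume (St x)).toReal :=
    (measurable_measure_prodMk_left hmeas').ennreal_toReal
  have hΨ : Continuous fun t : ℝ => Φ (max t 0) := by
    refine ContinuousOn.comp_continuous (fun x hx => (hΦdiff x hx).continuousWithinAt)
      (continuous_id.max continuous_const) fun x => le_max_right x 0
  have hsmC : AEStronglyMeasurable (fun x => Φ ((volume (SC x)).toReal)) volume := by
    have : (fun x => Φ ((volume (SC x)).toReal))
        = (fun t : ℝ => Φ (max t 0)) ∘ (fun x => (volume (SC x)).toReal) := by
      funext x; simp [max_eq_left ENNReal.toReal_nonneg]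
    rw [this]
    exact (hΨ.measurable.comp hρCmeas).aestronglyMeasurable
  have hsmT : AEStronglyMeasurable (fun x => Φ ((volume (St x)).toReal)) volume := by
    have : (fun x => Φ ((volume (St x)).toReal))
        = (fun t : ℝ => Φ (max t 0)) ∘ (fun x => (volume (St x)).toReal) := by
      funext x; simp [max_eq_left ENNReal.toReal_nonneg]
    rw [this]
    exact (hΨ.measurable.comp hρTmeas).aestronglyMeasurable
  -- convert Bochner integrals to lintegrals
  have hLC : ∫ x : ℝ, Φ ((volume (SC x)).toReal)
      = (∫⁻ x : ℝ, ENNReal.ofReal (Φ ((volume (SC x)).toReal))).toReal :=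
    integral_eq_lintegral_of_nonneg_ae
      (ae_of_all _ fun x => hΦnn _ ENNReal.toReal_nonneg) hsmC
  have hLT : ∫ x : ℝ, Φ ((volume (St x)).toReal)
      = (∫⁻ x : ℝ, ENNReal.ofReal (Φ ((volume (St x)).toReal))).toReal :=
    integral_eq_lintegral_of_nonneg_ae
      (ae_of_all _ fun x => hΦnn _ ENNReal.toReal_nonneg) hsmT
  -- the chain of (in)equalities
  have hCeq : ∫⁻ x : ℝ, ENNReal.ofReal (Φ ((volume (SC x)).toReal))
      = ∫⁻ h in Ici (0:ℝ), F h * volume (C h) := by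
    rw [← hTonC]
    exact lintegral_congr_ae hptC
  have hTle : ∫⁻ x : ℝ, ENNReal.ofReal (Φ ((volume (St x)).toReal))
      ≤ ∫⁻ h in Ici (0:ℝ), F h * volume (C h) := by
    rw [← hsame', ← hTonT]
    exact lintegral_mono_ae hptT
  rw [hLC, hLT]
  refine ENNReal.toReal_mono ?_ ?_
  · rw [hCeq]; exact hfinA
  · rw [hCeq]; exact hTle
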